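/- Let A be an n×m binary matrix and Y_1, …, Y_t transpositions of columns such that c(AY_1Y_2⋯Y_t) < c(AY_2⋯Y_t) < ⋯ < c(AY_t) < c(A) in lexicographic order. Then r(AY_1Y_2⋯Y_t) < r(A) in lexicographic order. -/

import Mathlib

/-- The value of a row of length `m` read as a binary number (most significant digit first). -/
def rowVal (m : ℕ) (row : Fin m → Bool) : ℕ :=
  ∑ j : Fin m, (row j).toNat * 2 ^ (m - 1 - (j : ℕ))

/-- `r(A)`: the tuple of row values of a binary matrix. -/
def rtup {n m : ℕ} (A : Fin n → Fin m → Bool) : Fin n → ℕ :=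
  fun i => rowVal m (A i)

/-- `c(A)`: the tuple of column values of a binary matrix. -/
def ctup {n m : ℕ} (A : Fin n → Fin m → Bool) : Fin m → ℕ :=
  fun j => rowVal n (fun i => A i j)

/-- `A ∼ B`: `B` is obtained from `A` by permuting rows and columns. -/
def MatEquiv {n m : ℕ} (A B : Fin n → Fin m → Bool) : Prop :=
  ∃ (ρ : Equiv.Perm (Fin n)) (σ : Equiv.Perm (Fin m)), ∀ i j, B i j = A (ρ i) (σ j)

/-- `A` is semi-canonical: both `r(A)` and `c(A)` are weakly increasing. -/
def SemiCanonical {n m : ℕ} (A : Fin n → Fin m → Bool) : Prop :=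
  Monotone (rtup A) ∧ Monotone (ctup A)

/-- `A` is canonical: `r(A)` is the lexicographic minimum over the equivalence class of `A`. -/
def Canonical {n m : ℕ} (A : Fin n → Fin m → Bool) : Prop :=
  ∀ B, MatEquiv A B → toLex (rtup A) ≤ toLex (rtup B)

lemma rowVal_lt_of_lex {m : ℕ} {f g : Fin m → Bool} {j : Fin m}
    (hpre : ∀ k, k < j → f k = g k) (hf : f j = false) (hg : g j = true) :
    rowVal m f < rowVal m g := by
  classical
  unfold rowVal
  rw [← Finset.sum_filter_add_sum_filter_not Finset.univ (fun k => k < j)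
        (fun k => (f k).toNat * 2 ^ (m - 1 - (k : ℕ))),
      ← Finset.sum_filter_add_sum_filter_not Finset.univ (fun k => k < j)
        (fun k => (g k).toNat * 2 ^ (m - 1 - (k : ℕ)))]
  have h1 : ∑ k ∈ Finset.univ.filter (fun k => k < j), (f k).toNat * 2 ^ (m - 1 - (k : ℕ))
      = ∑ k ∈ Finset.univ.filter (fun k => k < j), (g k).toNat * 2 ^ (m - 1 - (k : ℕ)) := by
    refine Finset.sum_congr rfl fun k hk => ?_
    rw [hpre k (Finset.mem_filter.1 hk).2]
  rw [h1]
  refine Nat.add_lt_add_left ?_ _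
  have hsplit : Finset.univ.filter (fun k : Fin m => ¬ k < j)
      = insert j (Finset.univ.filter (fun k => j < k)) := by
    ext k
    simp only [Finset.mem_filter, Finset.mem_univ, true_and, Finset.mem_insert, not_lt]
    constructor
    · intro h
      rcases eq_or_lt_of_le h with h' | h'
      · exact Or.inl h'.symm
      · exact Or.inr h'
    · rintro (rfl | h)
      · exact le_refl _
      · exact h.le
  have hnotmem : j ∉ Finset.univ.filter (fun k : Fin m => j < k) := by simp
  rw [hsplit, Finset.sum_insert hnotmem, Finset.sum_insert hnotmem, hf, hg]
  simp only [Bool.toNat_false, Bool.toNat_true, zero_mul, one_mul, zero_add]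
  have htail : ∑ k ∈ Finset.univ.filter (fun k : Fin m => j < k),
      (f k).toNat * 2 ^ (m - 1 - (k : ℕ)) < 2 ^ (m - 1 - (j : ℕ)) := by
    calc ∑ k ∈ Finset.univ.filter (fun k : Fin m => j < k),
          (f k).toNat * 2 ^ (m - 1 - (k : ℕ))
        ≤ ∑ k ∈ Finset.univ.filter (fun k : Fin m => j < k), 2 ^ (m - 1 - (k : ℕ)) := by
          refine Finset.sum_le_sum fun k _ => ?_
          have : (f k).toNat ≤ 1 := Bool.toNat_le _
          calc (f k).toNat * 2 ^ (m - 1 - (k : ℕ)) ≤ 1 * 2 ^ (m - 1 - (k : ℕ)) :=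
                Nat.mul_le_mul_right _ this
            _ = 2 ^ (m - 1 - (k : ℕ)) := one_mul _
      _ = ∑ x ∈ (Finset.univ.filter (fun k : Fin m => j < k)).image
            (fun k : Fin m => m - 1 - (k : ℕ)), 2 ^ x := by
          rw [Finset.sum_image]
          intro a _ b _ hab
          have ha := a.isLt
          have hb := b.isLt
          exact Fin.ext (by simp only at hab; omega)
      _ < 2 ^ (m - 1 - (j : ℕ)) := by
          refine Nat.geomSum_lt le_rfl ?_
          intro x hx
          obtain ⟨k, hk, rfl⟩ := Finset.mem_image.1 hx
          have hk' : (j : ℕ) < (k : ℕ) := (Finset.mem_filter.1 hk).2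
          have := k.isLt
          omega
  exact lt_of_lt_of_le htail (Nat.le_add_right _ _)

lemma exists_first_diff {n : ℕ} {f g : Fin n → Bool} (h : rowVal n f < rowVal n g) :
    ∃ i, (∀ k, k < i → f k = g k) ∧ f i = false ∧ g i = true := by
  classical
  have hne : f ≠ g := by rintro rfl; exact lt_irrefl _ h
  have hs : (Finset.univ.filter (fun i => f i ≠ g i)).Nonempty := by
    rw [Function.ne_iff] at hne
    obtain ⟨i, hi⟩ := hne
    exact ⟨i, by simp [hi]⟩
  set i := (Finset.univ.filter (fun i => f i ≠ g i)).min' hs with hidef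
  have hmem : f i ≠ g i := by
    have := Finset.min'_mem _ hs
    simpa using this
  have hpre : ∀ k, k < i → f k = g k := by
    intro k hk
    by_contra hkne
    have : i ≤ k := Finset.min'_le _ _ (by simp [hkne])
    exact absurd hk (not_lt.2 this)
  refine ⟨i, hpre, ?_⟩
  cases hfi : f i <;> cases hgi : g i
  · exact absurd (hfi.trans hgi.symm) hmem
  · exact ⟨rfl, rfl⟩
  · exact absurd h (not_lt.2 (rowVal_lt_of_lex (fun k hk => (hpre k hk).symm) hgi hfi).le)
  · exact absurd (hfi.trans hgi.symm) hmem

lemma key_step_lt {n m : ℕ} (P Q : Fin n → Fin m → Bool) {u v : Fin m} (huv : u < v)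
    (h : ∀ i j, P i j = Q i (Equiv.swap u v j))
    (hc : toLex (ctup P) < toLex (ctup Q)) :
    toLex (rtup P) < toLex (rtup Q) := by
  have hcc : ∀ j, ctup P j = ctup Q (Equiv.swap u v j) := by
    intro j
    unfold ctup
    congr 1
    funext i
    exact h i j
  obtain ⟨j, hjpre, hjlt⟩ := hc
  simp only [Pi.toLex_apply] at hjpre hjlt
  have hju : j = u := by
    by_contra hju
    rcases eq_or_ne j v with rfl | hjv
    · have h1 : ctup P u = ctup Q u := hjpre u huv
      rw [hcc u, Equiv.swap_apply_left] at h1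
      have h2 : ctup P j = ctup Q u := by rw [hcc j, Equiv.swap_apply_right]
      rw [h2, ← h1] at hjlt
      exact lt_irrefl _ hjlt
    · rw [hcc j, Equiv.swap_apply_of_ne_of_ne hju hjv] at hjlt
      exact lt_irrefl _ hjlt
  subst hju
  rw [hcc j, Equiv.swap_apply_left] at hjlt
  -- hjlt : ctup Q v < ctup Q u
  obtain ⟨i, hipre, hif, hig⟩ := exists_first_diff hjlt
  refine ⟨i, ?_, ?_⟩
  · intro k hk
    simp only [Pi.toLex_apply]
    unfold rtup
    congr 1
    funext l
    rw [h k l]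
    rcases eq_or_ne l j with rfl | hlu
    · rw [Equiv.swap_apply_left, ← hipre k hk]
    rcases eq_or_ne l v with rfl | hlv
    · rw [Equiv.swap_apply_right, hipre k hk]
    · rw [Equiv.swap_apply_of_ne_of_ne hlu hlv]
  · simp only [Pi.toLex_apply]
    unfold rtup
    refine rowVal_lt_of_lex (j := j) ?_ ?_ ?_
    · intro k hk
      rw [h i k, Equiv.swap_apply_of_ne_of_ne hk.ne (hk.trans huv).ne]
    · rw [h i j, Equiv.swap_apply_left]; exact hif
    · exact hig

lemma key_step {n m : ℕ} (P Q : Fin n → Fin m → Bool) {u v : Fin m} (huv : u ≠ v)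
    (h : ∀ i j, P i j = Q i (Equiv.swap u v j))
    (hc : toLex (ctup P) < toLex (ctup Q)) :
    toLex (rtup P) < toLex (rtup Q) := by
  rcases huv.lt_or_gt with h' | h'
  · exact key_step_lt P Q h' h hc
  · exact key_step_lt P Q h' (by simpa [Equiv.swap_comm] using h) hc

/-- Theorem 1 b): given a chain of matrices `B k`, where `B t = A` and each
`B k` is obtained from `B (k+1)` by a column transposition (so that
`B k = A Y_{k+1} ⋯ Y_t`), if the column tuples strictly decrease lexicographically
along the chain, then `r(A Y_1 Y_2 ⋯ Y_t) < r(A)` lexicographically. -/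
theorem chain_col_transpositions {n m t : ℕ} (ht : 0 < t)
    (A : Fin n → Fin m → Bool) (B : Fin (t + 1) → Fin n → Fin m → Bool)
    (hlast : B (Fin.last t) = A)
    (hswap : ∀ k : Fin t, ∃ u v : Fin m, u ≠ v ∧
      ∀ i j, B k.castSucc i j = B k.succ i (Equiv.swap u v j))
    (hchain : ∀ k : Fin t, toLex (ctup (B k.castSucc)) < toLex (ctup (B k.succ))) :
    toLex (rtup (B 0)) < toLex (rtup A) := by
  have hmono : StrictMono (fun k : Fin (t + 1) => toLex (rtup (B k))) := by
    refine Fin.strictMono_iff_lt_succ.2 fun k => ?_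
    obtain ⟨u, v, huv, hk⟩ := hswap k
    exact key_step _ _ huv hk (hchain k)
  have h0 : (0 : Fin (t + 1)) < Fin.last t := by
    rw [Fin.lt_def]
    simpa using ht
  have h := hmono h0
  simp only at h
  rwa [hlast] at h
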